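/- The function G(t) defined by G(t) = 0 for t ≤ 0 and G(t) = 1 - (1 - e^{-at})/(at) + (t/(a(λ+t)²))(1 - e^{-a(λ+t)}) for t > 0 is the CDF of the Exp-Max-U-Exp(a, λ) distribution: G is differentiable on (0, ∞) with derivative equal to the Exp-Max-U-Exp(a, λ) density, G(0+) = 0, and G(t) → 1 as t → ∞. -/

import Mathlib

open Filter Set

/-- The Exp-Max-U-Exp(a, λ) probability density function. -/
noncomputable def expMaxUExpPDF (a lam t : ℝ) : ℝ :=
  if t ≤ 0 then 0
  else (1 / (a * t ^ 2)) * (1 - Real.exp (-a * t) - a * t * Real.exp (-a * t))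
    + ((lam - t) / (a * (lam + t) ^ 3)) * (1 - Real.exp (-a * (lam + t)))
    + (t / (lam + t) ^ 2) * Real.exp (-a * (lam + t))

/-- The Exp-Max-U-Exp(a, λ) cumulative distribution function. -/
noncomputable def expMaxUExpCDF (a lam t : ℝ) : ℝ :=
  if t ≤ 0 then 0
  else 1 - (1 - Real.exp (-a * t)) / (a * t)
    + (t / (a * (lam + t) ^ 2)) * (1 - Real.exp (-a * (lam + t)))

theorem expMaxUExpCDF_is_CDF (a lam : ℝ) (ha : 0 < a) (hlam : 0 < lam) :
    (∀ t : ℝ, 0 < t → HasDerivAt (expMaxUExpCDF a lam) (expMaxUExpPDF a lam t) t) ∧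
    Tendsto (expMaxUExpCDF a lam) (nhdsWithin 0 (Set.Ioi 0)) (nhds 0) ∧
    Tendsto (expMaxUExpCDF a lam) atTop (nhds 1) := by
  have ha' : a ≠ 0 := ne_of_gt ha
  set g : ℝ → ℝ := fun t => 1 - (1 - Real.exp (-a * t)) / (a * t)
      + (t / (a * (lam + t) ^ 2)) * (1 - Real.exp (-a * (lam + t))) with hgdef
  have hEq : ∀ t : ℝ, 0 < t → expMaxUExpCDF a lam t = g t := by
    intro t ht
    simp [expMaxUExpCDF, not_le.mpr ht, hgdef]
  refine ⟨?_, ?_, ?_⟩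
  · intro t ht
    have hlt : 0 < lam + t := by linarith
    have hlt' : lam + t ≠ 0 := ne_of_gt hlt
    have ht' : t ≠ 0 := ne_of_gt ht
    have he1 : HasDerivAt (fun s : ℝ => Real.exp (-a * s)) (Real.exp (-a * t) * (-a * 1)) t :=
      ((hasDerivAt_id t).const_mul (-a)).exp
    have hden1 : HasDerivAt (fun s : ℝ => a * s) (a * 1) t := (hasDerivAt_id t).const_mul a
    have hA : HasDerivAt (fun s : ℝ => (1 - Real.exp (-a * s)) / (a * s))
        (((0 - Real.exp (-a * t) * (-a * 1)) * (a * t) - (1 - Real.exp (-a * t)) * (a * 1))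
          / (a * t) ^ 2) t :=
      ((hasDerivAt_const t 1).sub he1).div hden1 (by positivity)
    have hd0 : HasDerivAt (fun s : ℝ => lam + s) 1 t := (hasDerivAt_id t).const_add lam
    have hden2 : HasDerivAt (fun s : ℝ => a * (lam + s) ^ 2)
        (a * (2 * (lam + t) ^ 1 * 1)) t := (hd0.pow 2).const_mul a
    have hq : HasDerivAt (fun s : ℝ => s / (a * (lam + s) ^ 2))
        ((1 * (a * (lam + t) ^ 2) - t * (a * (2 * (lam + t) ^ 1 * 1))) / (a * (lam + t) ^ 2) ^ 2)
        t := (hasDerivAt_id t).div hden2 (by positivity)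
    have he2 : HasDerivAt (fun s : ℝ => Real.exp (-a * (lam + s)))
        (Real.exp (-a * (lam + t)) * (-a * 1)) t := (hd0.const_mul (-a)).exp
    have hB : HasDerivAt (fun s : ℝ => (s / (a * (lam + s) ^ 2)) * (1 - Real.exp (-a * (lam + s))))
        ((1 * (a * (lam + t) ^ 2) - t * (a * (2 * (lam + t) ^ 1 * 1))) / (a * (lam + t) ^ 2) ^ 2
          * (1 - Real.exp (-a * (lam + t)))
          + (t / (a * (lam + t) ^ 2)) * (0 - Real.exp (-a * (lam + t)) * (-a * 1))) t :=
      hq.mul ((hasDerivAt_const t 1).sub he2)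
    have hg : HasDerivAt g _ t := ((hasDerivAt_const t 1).sub hA).add hB
    have hfinal : HasDerivAt g (expMaxUExpPDF a lam t) t := by
      convert hg using 1
      simp only [expMaxUExpPDF, not_le.mpr ht, if_neg, if_false]
      field_simp
      ring
    refine hfinal.congr_of_eventuallyEq ?_
    filter_upwards [Ioi_mem_nhds ht] with s hs
    exact hEq s hs
  · have hg0 : Tendsto g (nhdsWithin 0 (Set.Ioi 0)) (nhds 0) := by
      have h1 : Tendsto (fun t : ℝ => (1 - Real.exp (-a * t)) / (a * t))
          (nhdsWithin 0 (Set.Ioi 0)) (nhds 1) := by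
        have hslope : Tendsto (slope Real.exp 0) (nhdsWithin 0 {(0:ℝ)}ᶜ) (nhds 1) := by
          have := (Real.hasDerivAt_exp 0)
          rw [hasDerivAt_iff_tendsto_slope] at this
          simpa [Real.exp_zero] using this
        have hmap : Tendsto (fun t : ℝ => -a * t) (nhdsWithin 0 (Set.Ioi 0))
            (nhdsWithin 0 {(0:ℝ)}ᶜ) := by
          rw [tendsto_nhdsWithin_iff]
          constructor
          · have hc : Continuous fun t : ℝ => -a * t := by fun_prop
            have h : Tendsto (fun t : ℝ => -a * t) (nhds (0:ℝ)) (nhds 0) := by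
              simpa using hc.tendsto 0
            exact h.mono_left nhdsWithin_le_nhds
          · filter_upwards [self_mem_nhdsWithin] with t ht
            have ht' : (0:ℝ) < t := ht
            simp only [Set.mem_compl_iff, Set.mem_singleton_iff]
            have : -a * t < 0 := by nlinarith
            exact ne_of_lt this
        have hcomp := hslope.comp hmap
        refine hcomp.congr fun t => ?_
        simp only [Function.comp_apply, slope_def_field, Real.exp_zero]
        rcases eq_or_ne t 0 with rfl | ht
        · simp
        · field_simp
          ring
      have h2 : Tendsto (fun t : ℝ => (t / (a * (lam + t) ^ 2)) * (1 - Real.exp (-a * (lam + t))))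
          (nhdsWithin 0 (Set.Ioi 0)) (nhds 0) := by
        have : ContinuousAt (fun t : ℝ => (t / (a * (lam + t) ^ 2)) * (1 - Real.exp (-a * (lam + t)))) 0 := by
          apply ContinuousAt.mul
          · exact ContinuousAt.div continuousAt_id (by fun_prop) (by positivity)
          · fun_prop
        have h0 : (fun t : ℝ => (t / (a * (lam + t) ^ 2)) * (1 - Real.exp (-a * (lam + t)))) 0 = 0 := by
          simp
        simpa [h0] using (this.continuousWithinAt (s := Set.Ioi 0)).tendsto
      have : Tendsto g (nhdsWithin 0 (Set.Ioi 0)) (nhds (1 - 1 + 0)) :=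
        ((tendsto_const_nhds.sub h1).add h2)
      simpa using this
    refine hg0.congr' ?_
    filter_upwards [self_mem_nhdsWithin] with t ht
    exact (hEq t ht).symm
  · have hg1 : Tendsto g atTop (nhds 1) := by
      have h1 : Tendsto (fun t : ℝ => (1 - Real.exp (-a * t)) / (a * t)) atTop (nhds 0) := by
        have hnum : Tendsto (fun t : ℝ => 1 - Real.exp (-a * t)) atTop (nhds 1) := by
          have : Tendsto (fun t : ℝ => -a * t) atTop atBot :=
            tendsto_id.const_mul_atTop_of_neg (by linarith)
          have := Real.tendsto_exp_atBot.comp this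
          simpa using tendsto_const_nhds.sub this
        have hden : Tendsto (fun t : ℝ => a * t) atTop atTop :=
          tendsto_id.const_mul_atTop ha
        simpa using hnum.div_atTop hden
      have h2 : Tendsto (fun t : ℝ => (t / (a * (lam + t) ^ 2)) * (1 - Real.exp (-a * (lam + t))))
          atTop (nhds 0) := by
        have hlt : Tendsto (fun t : ℝ => lam + t) atTop atTop :=
          tendsto_atTop_add_const_left _ _ tendsto_id
        have hq : Tendsto (fun t : ℝ => t / (a * (lam + t) ^ 2)) atTop (nhds 0) := by
          have hfrac : Tendsto (fun t : ℝ => t / (lam + t)) atTop (nhds 1) := by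
            have : Tendsto (fun t : ℝ => 1 - lam / (lam + t)) atTop (nhds (1 - 0)) :=
              tendsto_const_nhds.sub (tendsto_const_nhds.div_atTop hlt)
            have h' : Tendsto (fun t : ℝ => 1 - lam / (lam + t)) atTop (nhds 1) := by
              simpa using this
            refine h'.congr' ?_
            filter_upwards [eventually_gt_atTop 0] with t ht
            have : lam + t ≠ 0 := by positivity
            field_simp
            ring
          have hinv : Tendsto (fun t : ℝ => 1 / (a * (lam + t))) atTop (nhds 0) :=
            tendsto_const_nhds.div_atTop (hlt.const_mul_atTop ha)
          have h'' : Tendsto (fun t : ℝ => (t / (lam + t)) * (1 / (a * (lam + t))))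
              atTop (nhds 0) := by simpa using hfrac.mul hinv
          refine h''.congr' ?_
          filter_upwards [eventually_gt_atTop 0] with t ht
          rw [div_mul_div_comm, mul_one,
            show (lam + t) * (a * (lam + t)) = a * (lam + t) ^ 2 by ring]
        have hnum : Tendsto (fun t : ℝ => 1 - Real.exp (-a * (lam + t))) atTop (nhds 1) := by
          have : Tendsto (fun t : ℝ => -a * (lam + t)) atTop atBot :=
            hlt.const_mul_atTop_of_neg (by linarith)
          have := Real.tendsto_exp_atBot.comp this
          simpa using tendsto_const_nhds.sub this
        simpa using hq.mul hnum
      have : Tendsto g atTop (nhds (1 - 0 + 0)) := (tendsto_const_nhds.sub h1).add h2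
      simpa using this
    refine hg1.congr' ?_
    filter_upwards [eventually_gt_atTop 0] with t ht
    exact (hEq t ht).symm
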